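/- arXiv:2207.03250 — 5 statements merged into one kernel-verified Lean document; each statement's English description precedes it below -/
import Mathlib

section
/- For every positive integer $i$, $\sum_{k=1}^{\infty} \frac{H_{i+k}}{k(i+k)} = \frac{H_i^2 + H_i^{(2)}}{i}$. -/
open Real

noncomputable def H (n k : ℕ) : ℝ := ∑ i ∈ Finset.Icc 1 k, 1 / (i : ℝ) ^ n

noncomputable def h (n k : ℕ) : ℝ := ∑ i ∈ Finset.Icc 1 k, 1 / (2 * (i : ℝ) - 1) ^ n

noncomputable def zeta (s : ℕ) : ℝ := ∑' n : ℕ, 1 / ((n : ℝ) + 1) ^ s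

open Finset Filter Topology

lemma H_zero (n : ℕ) : H n 0 = 0 := by simp [H]

lemma H_succ (n m : ℕ) : H n (m + 1) = H n m + 1 / ((m : ℝ) + 1) ^ n := by
  rw [H, H, Finset.sum_Icc_succ_top (by omega)]
  push_cast
  ring

lemma H1_succ (m : ℕ) : H 1 (m + 1) = H 1 m + 1 / ((m : ℝ) + 1) := by
  simpa using H_succ 1 m

lemma H2_succ (m : ℕ) : H 2 (m + 1) = H 2 m + 1 / ((m : ℝ) + 1) ^ 2 := H_succ 2 m

lemma H_nonneg (n m : ℕ) : 0 ≤ H n m :=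
  Finset.sum_nonneg fun j _ => by positivity

lemma H_mono (n N j : ℕ) : H n N ≤ H n (N + j) := by
  induction j with
  | zero => simp
  | succ j ih =>
    have h := H_succ n (N + j)
    have h2 : (0:ℝ) ≤ 1 / (((N + j : ℕ) : ℝ) + 1) ^ n := by positivity
    show H n N ≤ H n (N + j + 1)
    linarith

lemma H_diff_le (n N j : ℕ) (hn : 1 ≤ n) :
    H n (N + j) - H n N ≤ (j : ℝ) / ((N : ℝ) + 1) := by
  induction j with
  | zero => simp
  | succ j ih =>
    have h := H_succ n (N + j)
    have hb : 1 / (((N + j : ℕ) : ℝ) + 1) ^ n ≤ 1 / ((N : ℝ) + 1) := by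
      have h1 : (1:ℝ) ≤ ((N + j : ℕ) : ℝ) + 1 := by
        have := Nat.cast_nonneg (α := ℝ) (N + j); linarith
      have h2 : ((N : ℝ) + 1) ≤ ((N + j : ℕ) : ℝ) + 1 := by
        push_cast; linarith [Nat.cast_nonneg (α := ℝ) j]
      calc 1 / (((N + j : ℕ) : ℝ) + 1) ^ n ≤ 1 / (((N + j : ℕ) : ℝ) + 1) ^ 1 := by
            apply one_div_le_one_div_of_le (by positivity)
            exact pow_le_pow_right₀ h1 hn
        _ ≤ 1 / ((N : ℝ) + 1) := by
            rw [pow_one]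
            exact one_div_le_one_div_of_le (by positivity) h2
    show H n (N + j + 1) - H n N ≤ _
    push_cast
    rw [add_div]
    linarith

lemma H1_le_sqrt (m : ℕ) : H 1 m ≤ 2 * Real.sqrt m := by
  induction m with
  | zero => simp [H_zero]
  | succ m ih =>
    rw [H1_succ]
    set t := Real.sqrt m with ht
    set s := Real.sqrt (m + 1) with hs
    have ht0 : 0 ≤ t := Real.sqrt_nonneg _
    have hs0 : 0 ≤ s := Real.sqrt_nonneg _
    have ht2 : t ^ 2 = m := Real.sq_sqrt (by positivity)
    have hs2 : s ^ 2 = (m : ℝ) + 1 := by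
      rw [hs]
      push_cast
      exact Real.sq_sqrt (by positivity)
    have hts : t ≤ s := by
      rw [ht, hs]
      exact Real.sqrt_le_sqrt (by push_cast; linarith)
    have hs1 : 1 ≤ s := by nlinarith [Nat.cast_nonneg (α := ℝ) m]
    have key : 1 / ((m : ℝ) + 1) ≤ 2 * (s - t) := by
      rw [div_le_iff₀ (by positivity)]
      nlinarith [sq_nonneg (s - t)]
    push_cast
    calc H 1 m + 1 / ((m:ℝ) + 1) ≤ 2 * t + 2 * (s - t) := by linarith
      _ = 2 * s := by ring

lemma sum_inv_Icc (m i : ℕ) :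
    ∑ j ∈ Finset.Icc 1 i, 1 / ((m : ℝ) + (j : ℝ)) = H 1 (m + i) - H 1 m := by
  induction i with
  | zero => simp
  | succ i ih =>
    rw [Finset.sum_Icc_succ_top (by omega), ih]
    have : H 1 (m + (i + 1)) = H 1 (m + i) + 1 / (((m + i : ℕ) : ℝ) + 1) := H1_succ (m + i)
    rw [show m + (i + 1) = m + i + 1 from rfl, H1_succ (m + i)]
    push_cast
    ring

lemma sum_H_div (M : ℕ) :
    ∑ m ∈ Finset.Icc 1 M, H 1 m / (m : ℝ) = (H 1 M ^ 2 + H 2 M) / 2 := by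
  induction M with
  | zero => simp [H_zero]
  | succ M ih =>
    rw [Finset.sum_Icc_succ_top (by omega), ih, H1_succ, H2_succ]
    have hM : ((M : ℝ) + 1) ≠ 0 := by positivity
    push_cast
    field_simp
    ring

lemma key_partial (i : ℕ) (hi : 0 < i) (N : ℕ) :
    ∑ k ∈ Finset.range N, H 1 (i + (k + 1)) / (((k : ℝ) + 1) * ((i : ℝ) + ((k : ℝ) + 1)))
      = (1 / (i : ℝ)) * ((H 1 i ^ 2 + H 2 i) / 2
          + ∑ j ∈ Finset.Icc 1 i, (H 1 j + H 1 N - H 1 (N + j)) / (j : ℝ)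
          + (H 1 N ^ 2 + H 2 N) / 2 - (H 1 (N + i) ^ 2 + H 2 (N + i)) / 2) := by
  induction N with
  | zero =>
    simp [H_zero]
  | succ N ih =>
    have hN1 : ((N : ℝ) + 1) ≠ 0 := by positivity
    have hi' : ((i : ℝ)) ≠ 0 := Nat.cast_ne_zero.mpr hi.ne'
    have hsum : ∑ j ∈ Finset.Icc 1 i, (H 1 j + H 1 (N + 1) - H 1 (N + 1 + j)) / (j : ℝ)
        = (∑ j ∈ Finset.Icc 1 i, (H 1 j + H 1 N - H 1 (N + j)) / (j : ℝ))
          + (H 1 (N + 1 + i) - H 1 (N + 1)) / ((N : ℝ) + 1) := by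
      have hterm : ∀ j ∈ Finset.Icc 1 i,
          (H 1 j + H 1 (N + 1) - H 1 (N + 1 + j)) / (j : ℝ)
          = (H 1 j + H 1 N - H 1 (N + j)) / (j : ℝ)
            + (1 / ((N : ℝ) + 1) - 1 / ((N : ℝ) + (j : ℝ) + 1)) * (1 / (j : ℝ)) := by
        intro j hj
        rw [show N + 1 + j = (N + j) + 1 from by omega, H1_succ (N + j), H1_succ N]
        push_cast
        ring
      rw [Finset.sum_congr rfl hterm, Finset.sum_add_distrib]
      congr 1
      have hterm2 : ∀ j ∈ Finset.Icc 1 i,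
          (1 / ((N : ℝ) + 1) - 1 / ((N : ℝ) + (j : ℝ) + 1)) * (1 / (j : ℝ))
          = (1 / ((N : ℝ) + 1)) * (1 / (((N + 1 : ℕ) : ℝ) + (j : ℝ))) := by
        intro j hj
        have hj1 : 1 ≤ j := (Finset.mem_Icc.mp hj).1
        have hj0 : (0:ℝ) < (j : ℝ) := by exact_mod_cast hj1
        have h2 : (N : ℝ) + (j : ℝ) + 1 ≠ 0 := by positivity
        push_cast
        field_simp
        ring
      rw [Finset.sum_congr rfl hterm2, ← Finset.mul_sum, sum_inv_Icc (N + 1) i]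
      ring
    rw [Finset.sum_range_succ, ih, hsum,
      show N + 1 + i = N + i + 1 from by omega,
      show i + (N + 1) = N + i + 1 from by omega,
      H1_succ (N + i), H2_succ (N + i), H1_succ N, H2_succ N]
    have hNi1 : ((N : ℝ) + (i : ℝ) + 1) ≠ 0 := by positivity
    push_cast
    field_simp
    ring

theorem stmt2 (i : ℕ) (hi : 0 < i) :
    ∑' k : ℕ, H 1 (i + (k + 1)) / (((k : ℝ) + 1) * ((i : ℝ) + ((k : ℝ) + 1))) =
      (H 1 i ^ 2 + H 2 i) / i := by
  have hi' : ((i : ℝ)) ≠ 0 := Nat.cast_ne_zero.mpr hi.ne'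
  have hipos : (0:ℝ) < i := by exact_mod_cast hi
  set E : ℕ → ℝ := fun N =>
    (∑ j ∈ Finset.Icc 1 i, (H 1 N - H 1 (N + j)) / (j : ℝ))
      + (H 1 N ^ 2 + H 2 N) / 2 - (H 1 (N + i) ^ 2 + H 2 (N + i)) / 2 with hE
  -- partial sums in terms of E
  have hpart : ∀ N, ∑ k ∈ Finset.range N,
      H 1 (i + (k + 1)) / (((k : ℝ) + 1) * ((i : ℝ) + ((k : ℝ) + 1)))
      = (H 1 i ^ 2 + H 2 i) / i + (1 / (i : ℝ)) * E N := by
    intro N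
    rw [key_partial i hi N]
    have hsplit : ∑ j ∈ Finset.Icc 1 i, (H 1 j + H 1 N - H 1 (N + j)) / (j : ℝ)
        = (H 1 i ^ 2 + H 2 i) / 2
          + ∑ j ∈ Finset.Icc 1 i, (H 1 N - H 1 (N + j)) / (j : ℝ) := by
      rw [← sum_H_div i, ← Finset.sum_add_distrib]
      refine Finset.sum_congr rfl fun j hj => ?_
      ring
    rw [hsplit]
    simp only [hE]
    field_simp
    ring
  -- bounds on E
  have hEle : ∀ N, E N ≤ 0 := by
    intro N
    simp only [hE]
    have h1 : ∑ j ∈ Finset.Icc 1 i, (H 1 N - H 1 (N + j)) / (j : ℝ) ≤ 0 := by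
      apply Finset.sum_nonpos
      intro j hj
      have hj1 : 1 ≤ j := (Finset.mem_Icc.mp hj).1
      have hj0 : (0:ℝ) < (j : ℝ) := by exact_mod_cast hj1
      apply div_nonpos_of_nonpos_of_nonneg _ hj0.le
      linarith [H_mono 1 N j]
    have h2 : H 1 N ^ 2 ≤ H 1 (N + i) ^ 2 := by
      have := H_mono 1 N i
      have := H_nonneg 1 N
      nlinarith
    have h3 : H 2 N ≤ H 2 (N + i) := H_mono 2 N i
    linarith
  have hEge : ∀ N : ℕ, -(2 * ((i : ℝ) / ((N : ℝ) + 1))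
      + 4 * (i : ℝ) * Real.sqrt i * (1 / Real.sqrt ((N : ℝ) + 1))) ≤ E N := by
    intro N
    have hN1 : (0:ℝ) < (N : ℝ) + 1 := by positivity
    -- sum part lower bound
    have hS : -((i : ℝ) / ((N : ℝ) + 1))
        ≤ ∑ j ∈ Finset.Icc 1 i, (H 1 N - H 1 (N + j)) / (j : ℝ) := by
      have : ∀ j ∈ Finset.Icc 1 i, -(1 / ((N : ℝ) + 1)) ≤ (H 1 N - H 1 (N + j)) / (j : ℝ) := by
        intro j hj
        have hj1 : 1 ≤ j := (Finset.mem_Icc.mp hj).1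
        have hj0 : (0:ℝ) < (j : ℝ) := by exact_mod_cast hj1
        have hd := H_diff_le 1 N j le_rfl
        rw [le_div_iff₀ hj0]
        have hjge : (1:ℝ) ≤ (j:ℝ) := by exact_mod_cast hj1
        have : (j : ℝ) / ((N : ℝ) + 1) ≤ (j : ℝ) * (1 / ((N:ℝ)+1)) := by
          rw [mul_one_div]
        nlinarith
      have hcard : (Finset.Icc 1 i).card = i := by
        rw [Nat.card_Icc]; omega
      have h4 := Finset.card_nsmul_le_sum (Finset.Icc 1 i)
        (fun j => (H 1 N - H 1 (N + j)) / (j : ℝ)) (-(1 / ((N : ℝ) + 1))) this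
      rw [hcard, nsmul_eq_mul] at h4
      calc -((i : ℝ) / ((N : ℝ) + 1)) = (i : ℝ) * -(1 / ((N : ℝ) + 1)) := by ring
        _ ≤ _ := h4
    -- square part
    have hsqNi : Real.sqrt (N + i) ≤ Real.sqrt i * Real.sqrt ((N : ℝ) + 1) := by
      rw [← Real.sqrt_mul (by positivity)]
      apply Real.sqrt_le_sqrt
      push_cast
      have h1 : (1:ℝ) ≤ (i:ℝ) := by exact_mod_cast hi
      nlinarith [Nat.cast_nonneg (α := ℝ) N]
    have hs0 : (0:ℝ) < Real.sqrt ((N : ℝ) + 1) := Real.sqrt_pos.mpr hN1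
    have hs2 : Real.sqrt ((N : ℝ) + 1) ^ 2 = (N : ℝ) + 1 := Real.sq_sqrt hN1.le
    have hP : H 1 (N + i) ^ 2 - H 1 N ^ 2
        ≤ 4 * (i : ℝ) * Real.sqrt i * (1 / Real.sqrt ((N : ℝ) + 1)) := by
      have hd := H_diff_le 1 N i le_rfl
      have hm := H_mono 1 N i
      have hnn := H_nonneg 1 N
      have hub : H 1 (N + i) ≤ 2 * Real.sqrt (N + i) := by
        have := H1_le_sqrt (N + i)
        push_cast at this ⊢
        linarith
      have hub2 : H 1 (N + i) ≤ 2 * Real.sqrt i * Real.sqrt ((N : ℝ) + 1) := by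
        nlinarith
      have hfact : H 1 (N + i) ^ 2 - H 1 N ^ 2
          = (H 1 (N + i) - H 1 N) * (H 1 (N + i) + H 1 N) := by ring
      have hstep : (H 1 (N + i) - H 1 N) * (H 1 (N + i) + H 1 N)
          ≤ ((i : ℝ) / ((N : ℝ) + 1)) * (4 * Real.sqrt i * Real.sqrt ((N : ℝ) + 1)) := by
        apply mul_le_mul hd _ (by linarith) (by positivity)
        linarith
      have heq : ((i : ℝ) / ((N : ℝ) + 1)) * (4 * Real.sqrt i * Real.sqrt ((N : ℝ) + 1))
          = 4 * (i : ℝ) * Real.sqrt i * (1 / Real.sqrt ((N : ℝ) + 1)) := by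
        field_simp
        linear_combination hs2
      rw [hfact, ← heq]
      exact hstep
    have hQ : H 2 (N + i) - H 2 N ≤ (i : ℝ) / ((N : ℝ) + 1) := H_diff_le 2 N i (by omega)
    have hpos1 : (0:ℝ) ≤ (i : ℝ) / ((N : ℝ) + 1) := by positivity
    have hpos2 : (0:ℝ) ≤ 4 * (i : ℝ) * Real.sqrt i * (1 / Real.sqrt ((N : ℝ) + 1)) := by
      positivity
    have goalcheck : E N = (∑ j ∈ Finset.Icc 1 i, (H 1 N - H 1 (N + j)) / (j:ℝ))
        + (H 1 N ^ 2 + H 2 N) / 2 - (H 1 (N + i) ^ 2 + H 2 (N + i)) / 2 := rfl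
    rw [goalcheck]
    set c := (i : ℝ) / ((N : ℝ) + 1) with hc
    set M := 4 * (i : ℝ) * Real.sqrt i * (1 / Real.sqrt ((N : ℝ) + 1)) with hM
    linarith [hS, hP, hQ, hpos1, hpos2]
  -- limits
  have hs_atTop : Tendsto (fun N : ℕ => Real.sqrt ((N : ℝ) + 1)) atTop atTop := by
    rw [tendsto_atTop_atTop]
    intro b
    refine ⟨⌈b ^ 2⌉₊, fun n hn => ?_⟩
    rcases le_or_gt b 0 with hb | hb
    · exact hb.trans (Real.sqrt_nonneg _)
    · have h1 : b ^ 2 ≤ (n : ℝ) + 1 := by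
        have h2 : b ^ 2 ≤ (⌈b ^ 2⌉₊ : ℝ) := Nat.le_ceil _
        have h3 : ((⌈b ^ 2⌉₊ : ℕ) : ℝ) ≤ (n : ℝ) := by exact_mod_cast hn
        linarith
      calc b = Real.sqrt (b ^ 2) := (Real.sqrt_sq hb.le).symm
        _ ≤ _ := Real.sqrt_le_sqrt h1
  have hinv_sqrt : Tendsto (fun N : ℕ => 1 / Real.sqrt ((N : ℝ) + 1)) atTop (𝓝 0) := by
    simpa [one_div, Pi.inv_def] using hs_atTop.inv_tendsto_atTop
  have hB : Tendsto (fun N : ℕ => 2 * ((i : ℝ) / ((N : ℝ) + 1))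
      + 4 * (i : ℝ) * Real.sqrt i * (1 / Real.sqrt ((N : ℝ) + 1))) atTop (𝓝 0) := by
    have h1 : Tendsto (fun N : ℕ => 2 * (i : ℝ) * (1 / ((N : ℝ) + 1))) atTop (𝓝 (2 * (i:ℝ) * 0)) :=
      tendsto_one_div_add_atTop_nhds_zero_nat.const_mul _
    have h2 : Tendsto (fun N : ℕ => 4 * (i : ℝ) * Real.sqrt i * (1 / Real.sqrt ((N : ℝ) + 1)))
        atTop (𝓝 (4 * (i:ℝ) * Real.sqrt i * 0)) := hinv_sqrt.const_mul _
    have := h1.add h2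
    simp only [mul_zero, add_zero] at this
    exact this.congr fun N => by ring
  have hE0 : Tendsto E atTop (𝓝 0) := by
    have hBneg : Tendsto (fun N : ℕ => -(2 * ((i : ℝ) / ((N : ℝ) + 1))
        + 4 * (i : ℝ) * Real.sqrt i * (1 / Real.sqrt ((N : ℝ) + 1)))) atTop (𝓝 0) := by
      simpa using hB.neg
    exact tendsto_of_tendsto_of_tendsto_of_le_of_le hBneg tendsto_const_nhds hEge hEle
  have htend : Tendsto (fun N => ∑ k ∈ Finset.range N,
      H 1 (i + (k + 1)) / (((k : ℝ) + 1) * ((i : ℝ) + ((k : ℝ) + 1)))) atTop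
      (𝓝 ((H 1 i ^ 2 + H 2 i) / i)) := by
    have h1 : Tendsto (fun N => (H 1 i ^ 2 + H 2 i) / (i : ℝ) + (1 / (i : ℝ)) * E N) atTop
        (𝓝 ((H 1 i ^ 2 + H 2 i) / i + (1 / (i : ℝ)) * 0)) :=
      tendsto_const_nhds.add (hE0.const_mul _)
    simp only [mul_zero, add_zero] at h1
    exact h1.congr fun N => (hpart N).symm
  have hnn : ∀ k : ℕ, 0 ≤ H 1 (i + (k + 1)) / (((k : ℝ) + 1) * ((i : ℝ) + ((k : ℝ) + 1))) :=
    fun k => div_nonneg (H_nonneg _ _) (by positivity)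
  exact ((hasSum_iff_tendsto_nat_of_nonneg hnn _).mpr htend).tsum_eq
end

section
/- For every positive integer $i$, $\sum_{k=1}^{\infty} \frac{H_k}{k(i+k)} = \frac{\zeta(2)}{i} + \frac{1}{i}\sum_{k=1}^{i-1} \frac{H_k}{k}$. -/
open Real Filter Topology

lemma base_summable : Summable (fun n : ℕ => 1 / ((n : ℝ) + 1) ^ 2) := by
  have := (summable_nat_add_iff 1).mpr (summable_one_div_nat_pow.mpr (le_refl 2))
  exact this.congr (fun n => by push_cast; ring)

lemma H_range (n : ℕ) : H 1 n = ∑ j ∈ Finset.range n, 1 / ((j : ℝ) + 1) := by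
  induction n with
  | zero => simp [H]
  | succ n ih =>
    rw [Finset.sum_range_succ, ← ih, H, Finset.sum_Icc_succ_top (Nat.succ_le_succ (Nat.zero_le n))]
    rw [H]
    push_cast
    ring

lemma shift_tele (f : ℕ → ℝ) (i N : ℕ) :
    ∑ m ∈ Finset.range N, (f m - f (m + i)) =
      ∑ t ∈ Finset.range i, f t - ∑ t ∈ Finset.range i, f (N + t) := by
  induction N with
  | zero => simp
  | succ N ih =>
    rw [Finset.sum_range_succ, ih]
    have h1 : ∑ t ∈ Finset.range i, f (N + 1 + t)
        = ∑ t ∈ Finset.range i, f (N + t) + f (N + i) - f N := by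
      have h2 : ∑ t ∈ Finset.range (i+1), f (N + t)
          = ∑ t ∈ Finset.range i, f (N + (t+1)) + f (N + 0) := Finset.sum_range_succ' _ _
      rw [Finset.sum_range_succ] at h2
      have h3 : ∑ t ∈ Finset.range i, f (N + 1 + t) = ∑ t ∈ Finset.range i, f (N + (t+1)) := by
        apply Finset.sum_congr rfl; intro t _; congr 1; omega
      rw [h3]
      simp only [Nat.add_zero] at h2
      linarith
    rw [h1]; ring

lemma tele (K i : ℕ) (hK : 0 < K) (hi : 0 < i) :
    HasSum (fun m : ℕ => 1 / (((K : ℝ) + m) * ((K : ℝ) + m + i)))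
      ((1 / i) * ∑ t ∈ Finset.range i, 1 / ((K : ℝ) + t)) := by
  have hK1 : (1 : ℝ) ≤ K := by exact_mod_cast hK
  have hi1 : (1 : ℝ) ≤ i := by exact_mod_cast hi
  set f : ℕ → ℝ := fun m => 1 / (((K : ℝ) + m) * ((K : ℝ) + m + i)) with hf
  have hpos : ∀ m : ℕ, (0:ℝ) < (K : ℝ) + m := fun m => by
    have : (0:ℝ) ≤ m := Nat.cast_nonneg m; linarith
  have hsum : Summable f := by
    apply Summable.of_nonneg_of_le (fun m => by
        have := hpos m; have : (0:ℝ) < (K:ℝ)+m+i := by linarith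
        positivity)
      (fun m => ?_) base_summable
    have h1 : ((m:ℝ) + 1) ≤ (K:ℝ) + m := by linarith [Nat.cast_nonneg (α := ℝ) m]
    have h2 : ((m:ℝ) + 1) ≤ (K:ℝ) + m + i := by linarith
    have hm1 : (0:ℝ) < (m:ℝ) + 1 := by positivity
    rw [hf]
    calc 1 / (((K : ℝ) + m) * ((K : ℝ) + m + i)) ≤ 1 / (((m:ℝ)+1) * ((m:ℝ)+1)) := by
          apply one_div_le_one_div_of_le (by positivity)
          exact mul_le_mul h1 h2 (le_of_lt hm1) (le_of_lt (hpos m))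
      _ = 1 / ((m:ℝ)+1)^2 := by rw [pow_two]
  set g : ℕ → ℝ := fun m => 1 / ((K : ℝ) + m) with hg
  have hterm : ∀ m : ℕ, f m = (1/i) * (g m - g (m + i)) := by
    intro m
    have h0 := hpos m
    have h0' : (0:ℝ) < (K:ℝ)+m+i := by linarith
    have hi0 : (i:ℝ) ≠ 0 := by linarith
    rw [hf, hg]
    push_cast
    field_simp
    ring_nf
  set L := (1 / (i:ℝ)) * ∑ t ∈ Finset.range i, 1 / ((K : ℝ) + t) with hL
  have hpart : ∀ N, ∑ m ∈ Finset.range N, f m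
      = (1/(i:ℝ)) * (∑ t ∈ Finset.range i, g t - ∑ t ∈ Finset.range i, g (N + t)) := by
    intro N
    rw [← shift_tele g i N, Finset.mul_sum]
    exact Finset.sum_congr rfl (fun m _ => hterm m)
  have htail : Tendsto (fun N => ∑ t ∈ Finset.range i, g (N + t)) atTop (𝓝 0) := by
    apply tendsto_of_tendsto_of_tendsto_of_le_of_le' tendsto_const_nhds
      (tendsto_const_div_atTop_nhds_zero_nat (i : ℝ))
    · filter_upwards with N
      apply Finset.sum_nonneg
      intro t _
      exact le_of_lt (by rw [hg]; have := hpos (N+t); positivity)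
    · filter_upwards [eventually_ge_atTop 1] with N hN
      have hN1 : (1:ℝ) ≤ N := by exact_mod_cast hN
      calc ∑ t ∈ Finset.range i, g (N + t) ≤ ∑ t ∈ Finset.range i, 1 / (N:ℝ) := by
            apply Finset.sum_le_sum
            intro t _
            rw [hg]
            apply one_div_le_one_div_of_le (by linarith)
            push_cast
            linarith [Nat.cast_nonneg (α := ℝ) t]
        _ = (i:ℝ) / N := by rw [Finset.sum_const, Finset.card_range]; ring
  have hT : Tendsto (fun N => ∑ m ∈ Finset.range N, f m) atTop (𝓝 L) := by
    simp only [hpart]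
    have : Tendsto (fun N => (1/(i:ℝ)) * (∑ t ∈ Finset.range i, g t - ∑ t ∈ Finset.range i, g (N + t)))
        atTop (𝓝 ((1/(i:ℝ)) * (∑ t ∈ Finset.range i, g t - 0))) :=
      (tendsto_const_nhds.sub htail).const_mul _
    simpa [hL, hg] using this
  have := hsum.hasSum
  rwa [tendsto_nhds_unique hsum.hasSum.tendsto_sum_nat hT] at this

/-- The double-sum entry. -/
noncomputable def u (i j k : ℕ) : ℝ :=
  if j ≤ k then (1/((j:ℝ)+1)) * (1/(((k:ℝ)+1) * ((i:ℝ)+((k:ℝ)+1)))) else 0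

lemma row_hasSum (i : ℕ) (hi : 0 < i) (j : ℕ) :
    HasSum (fun k : ℕ => u i j k)
      ((1/((j:ℝ)+1)) * ((1/(i:ℝ)) * ∑ t ∈ Finset.range i, 1 / (((j:ℝ)+1) + t))) := by
  have h1 := (tele (j+1) i (Nat.succ_pos j) hi).mul_left (1/((j:ℝ)+1))
  have h2 : (fun m : ℕ => u i j (m + j)) =
      (fun m : ℕ => (1/((j:ℝ)+1)) * (1 / ((((j+1:ℕ)) : ℝ) + m) / ((((j+1:ℕ)):ℝ) + m + i))) := by
    funext m
    rw [u, if_pos (Nat.le_add_left j m)]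
    push_cast
    have hm : (0:ℝ) ≤ (m:ℝ) := Nat.cast_nonneg m
    have hj : (0:ℝ) ≤ (j:ℝ) := Nat.cast_nonneg j
    have hi' : (0:ℝ) < (i:ℝ) := by exact_mod_cast hi
    rw [div_div]
    ring_nf
  have h3 : HasSum (fun m : ℕ => u i j (m + j))
      ((1/((j:ℝ)+1)) * ((1/(i:ℝ)) * ∑ t ∈ Finset.range i, 1 / (((j:ℝ)+1) + t))) := by
    rw [h2]
    convert h1 using 2 with m
    · rfl
    · push_cast; rw [div_div]
    · push_cast; rfl
  have h4 := (hasSum_nat_add_iff (f := fun k => u i j k) j).mp h3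
  have h5 : ∑ t ∈ Finset.range j, u i j t = 0 := by
    apply Finset.sum_eq_zero
    intro t ht
    rw [Finset.mem_range] at ht
    rw [u, if_neg (by omega)]
  rwa [h5, add_zero] at h4

lemma u_nonneg (i j k : ℕ) : 0 ≤ u i j k := by
  rw [u]
  split
  · positivity
  · exact le_refl 0

lemma v_summable (t : ℕ) :
    Summable (fun j : ℕ => 1 / (((j:ℝ)+1) * (((j:ℝ)+1) + t))) := by
  rcases Nat.eq_zero_or_pos t with ht | ht
  · subst ht
    exact base_summable.congr (fun j => by push_cast; ring_nf)
  · exact ((tele 1 t one_pos ht).summable).congr (fun j => by push_cast; ring_nf)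

lemma v_tsum_pos (t : ℕ) (ht : 0 < t) :
    ∑' j : ℕ, 1 / (((j:ℝ)+1) * (((j:ℝ)+1) + t)) = H 1 t / t := by
  have h1 := (tele 1 t one_pos ht)
  have h2 : HasSum (fun j : ℕ => 1 / (((j:ℝ)+1) * (((j:ℝ)+1) + t)))
      ((1/(t:ℝ)) * ∑ s ∈ Finset.range t, 1 / (((1:ℕ):ℝ) + s)) :=
    h1.congr_fun (fun j => by push_cast; ring_nf)
  rw [h2.tsum_eq]
  have h3 : ∑ s ∈ Finset.range t, 1 / (((1:ℕ):ℝ) + s) = H 1 t := by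
    rw [H_range]
    exact Finset.sum_congr rfl (fun s _ => by push_cast; ring_nf)
  rw [h3, one_div, inv_mul_eq_div]

lemma v_tsum_zero : ∑' j : ℕ, 1 / (((j:ℝ)+1) * (((j:ℝ)+1) + (0:ℕ))) = π^2/6 := by
  have h0 : HasSum (fun n : ℕ => 1 / (((n:ℝ)+1)^2)) (π^2/6) := by
    have := (hasSum_nat_add_iff (f := fun n : ℕ => 1 / (n:ℝ)^2) 1).mpr
      (by simpa using hasSum_zeta_two)
    exact this.congr_fun (fun n => by push_cast; ring_nf)
  have h1 : HasSum (fun j : ℕ => 1 / (((j:ℝ)+1) * (((j:ℝ)+1) + (0:ℕ)))) (π^2/6) :=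
    h0.congr_fun (fun j => by push_cast; ring_nf)
  exact h1.tsum_eq

lemma col_tsum (i : ℕ) (k : ℕ) :
    ∑' j : ℕ, u i j k = H 1 (k+1) / (((k:ℝ)+1) * ((i:ℝ)+((k:ℝ)+1))) := by
  rw [tsum_eq_sum (s := Finset.range (k+1))
    (fun j hj => by rw [u, if_neg (by simpa using hj)])]
  have h1 : ∀ j ∈ Finset.range (k+1),
      u i j k = (1/((j:ℝ)+1)) * (1/(((k:ℝ)+1) * ((i:ℝ)+((k:ℝ)+1)))) := by
    intro j hj
    rw [u, if_pos (by simp at hj; omega)]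
  rw [Finset.sum_congr rfl h1, ← Finset.sum_mul, ← H_range, mul_one_div]

lemma prod_summable (i : ℕ) (hi : 0 < i) : Summable (Function.uncurry (u i)) := by
  rw [show Function.uncurry (u i) = fun p : ℕ × ℕ => u i p.1 p.2 from rfl,
    summable_prod_of_nonneg (fun p => u_nonneg i p.1 p.2)]
  refine ⟨fun j => (row_hasSum i hi j).summable, ?_⟩
  have hv : ∀ j : ℕ, ∑' k, u i j k
      = (1/((j:ℝ)+1)) * ((1/(i:ℝ)) * ∑ t ∈ Finset.range i, 1 / (((j:ℝ)+1) + t)) :=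
    fun j => (row_hasSum i hi j).tsum_eq
  have hi' : (0:ℝ) < i := by exact_mod_cast hi
  apply Summable.of_nonneg_of_le (fun j => ?_) (fun j => ?_) base_summable
  · rw [hv j]
    have : (0:ℝ) ≤ ∑ t ∈ Finset.range i, 1 / (((j:ℝ)+1) + t) := by
      apply Finset.sum_nonneg; intro t _; positivity
    positivity
  · rw [hv j]
    have hb : ∑ t ∈ Finset.range i, 1 / (((j:ℝ)+1) + t) ≤ (i:ℝ) * (1/((j:ℝ)+1)) := by
      calc ∑ t ∈ Finset.range i, 1 / (((j:ℝ)+1) + t)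
          ≤ ∑ t ∈ Finset.range i, 1 / ((j:ℝ)+1) := by
            apply Finset.sum_le_sum; intro t _
            apply one_div_le_one_div_of_le (by positivity)
            linarith [Nat.cast_nonneg (α := ℝ) t]
        _ = (i:ℝ) * (1/((j:ℝ)+1)) := by rw [Finset.sum_const, Finset.card_range, nsmul_eq_mul]
    calc (1/((j:ℝ)+1)) * ((1/(i:ℝ)) * ∑ t ∈ Finset.range i, 1 / (((j:ℝ)+1) + t))
        ≤ (1/((j:ℝ)+1)) * ((1/(i:ℝ)) * ((i:ℝ) * (1/((j:ℝ)+1)))) := by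
          apply mul_le_mul_of_nonneg_left _ (by positivity)
          exact mul_le_mul_of_nonneg_left hb (by positivity)
      _ = 1 / ((j:ℝ)+1)^2 := by field_simp

theorem stmt5 (i : ℕ) (hi : 0 < i) :
    ∑' k : ℕ, H 1 (k + 1) / (((k : ℝ) + 1) * ((i : ℝ) + ((k : ℝ) + 1))) =
      (π ^ 2 / 6) / i + (1 / i) * ∑ k ∈ Finset.Icc 1 (i - 1), H 1 k / k := by
  have hi' : (0:ℝ) < i := by exact_mod_cast hi
  calc ∑' k : ℕ, H 1 (k + 1) / (((k : ℝ) + 1) * ((i : ℝ) + ((k : ℝ) + 1)))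
      = ∑' (k : ℕ) (j : ℕ), u i j k := tsum_congr (fun k => (col_tsum i k).symm)
    _ = ∑' (j : ℕ) (k : ℕ), u i j k := Summable.tsum_comm (prod_summable i hi)
    _ = ∑' j : ℕ, (1/(i:ℝ)) * ∑ t ∈ Finset.range i, 1 / (((j:ℝ)+1) * (((j:ℝ)+1) + t)) := by
        apply tsum_congr
        intro j
        rw [(row_hasSum i hi j).tsum_eq, mul_left_comm]
        congr 1
        rw [Finset.mul_sum]
        exact Finset.sum_congr rfl (fun t _ => one_div_mul_one_div _ _)
    _ = (1/(i:ℝ)) * ∑' j : ℕ, ∑ t ∈ Finset.range i, 1 / (((j:ℝ)+1) * (((j:ℝ)+1) + t)) :=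
        tsum_mul_left
    _ = (1/(i:ℝ)) * ∑ t ∈ Finset.range i, ∑' j : ℕ, 1 / (((j:ℝ)+1) * (((j:ℝ)+1) + t)) := by
        rw [Summable.tsum_finsetSum (fun t _ => v_summable t)]
    _ = (π ^ 2 / 6) / i + (1 / i) * ∑ k ∈ Finset.Icc 1 (i - 1), H 1 k / k := by
        rw [Finset.range_eq_Ico, Finset.sum_eq_sum_Ico_succ_bot hi]
        rw [v_tsum_zero]
        have hIco : Finset.Ico 1 i = Finset.Icc 1 (i-1) := by
          rw [← Finset.Ico_add_one_right_eq_Icc]; congr 1; omega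
        rw [← hIco]
        rw [Finset.sum_congr rfl (fun t ht => v_tsum_pos t (Finset.mem_Ico.mp ht).1)]
        ring
end

section
/- For every positive integer $i$, $\sum_{k=1}^{\infty} \frac{h_k}{(2k-1)(2i+2k-1)} = \frac{3\zeta(2)}{8i} + \frac{1}{4i}\sum_{k=1}^{i-1} \frac{h_k}{k}$. -/
open Real

open Filter Topology Finset

lemma hasSum_congr_fun' {f g : ℕ → ℝ} {a : ℝ} (hf : HasSum f a) (h : ∀ x, g x = f x) :
    HasSum g a := (funext h : g = f) ▸ hf

/-- reciprocal of the (k+1)-st odd number -/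
noncomputable def cc (k : ℕ) : ℝ := 1 / (2 * (k : ℝ) + 1)

lemma cc_pos (k : ℕ) : 0 < cc k := by
  unfold cc; positivity

lemma cc_nonneg (k : ℕ) : 0 ≤ cc k := (cc_pos k).le

lemma cc_anti {m n : ℕ} (hmn : m ≤ n) : cc n ≤ cc m := by
  unfold cc
  apply one_div_le_one_div_of_le (by positivity)
  have : (m : ℝ) ≤ n := Nat.cast_le.2 hmn
  linarith

lemma cc_tendsto : Tendsto cc atTop (𝓝 0) := by
  have h1 : Tendsto (fun k : ℕ => 2 * (k : ℝ) + 1) atTop atTop := by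
    apply tendsto_atTop_add_const_right
    exact (tendsto_natCast_atTop_atTop).const_mul_atTop two_pos
  exact h1.inv_tendsto_atTop.congr (fun k => by simp [cc, one_div])

lemma h_eq (k : ℕ) : h 1 k = ∑ t ∈ Finset.range k, cc t := by
  induction k with
  | zero => simp [h]
  | succ n ih =>
      rw [Finset.sum_range_succ, ← ih, h, h, Finset.sum_Icc_succ_top (by omega)]
      push_cast
      simp [cc]
      ring

/-- Telescoping sum with shift `i`. -/
lemma hasSum_tele (f : ℕ → ℝ) (h0 : ∀ n, 0 ≤ f n) (hanti : ∀ m n, m ≤ n → f n ≤ f m)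
    (hlim : Tendsto f atTop (𝓝 0)) (i : ℕ) :
    HasSum (fun k => f k - f (k + i)) (∑ t ∈ Finset.range i, f t) := by
  have hnn : ∀ k, 0 ≤ f k - f (k + i) :=
    fun k => sub_nonneg.2 (hanti k (k + i) (Nat.le_add_right _ _))
  rw [hasSum_iff_tendsto_nat_of_nonneg hnn]
  have key : ∀ n, i ≤ n → ∑ k ∈ Finset.range n, (f k - f (k + i)) =
      ∑ t ∈ Finset.range i, f t - ∑ t ∈ Finset.range i, f (n + t) := by
    intro n hn
    rw [Finset.sum_sub_distrib]
    have h1 : ∑ k ∈ Finset.range n, f (k + i) = ∑ k ∈ Finset.Ico i (n + i), f k := by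
      rw [Finset.sum_Ico_eq_sum_range]
      simp only [Nat.add_sub_cancel]
      exact Finset.sum_congr rfl (fun x _ => by rw [Nat.add_comm])
    have h2 : ∑ t ∈ Finset.range i, f (n + t) = ∑ k ∈ Finset.Ico n (n + i), f k := by
      rw [Finset.sum_Ico_eq_sum_range]
      simp only [Nat.add_sub_cancel_left]
    rw [h1, h2]
    have e1 : ∑ k ∈ Finset.Ico 0 i, f k + ∑ k ∈ Finset.Ico i n, f k
        = ∑ k ∈ Finset.Ico 0 n, f k :=
      Finset.sum_Ico_consecutive f (Nat.zero_le _) hn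
    have e2 : ∑ k ∈ Finset.Ico i n, f k + ∑ k ∈ Finset.Ico n (n + i), f k
        = ∑ k ∈ Finset.Ico i (n + i), f k :=
      Finset.sum_Ico_consecutive f hn (Nat.le_add_right _ _)
    rw [Finset.range_eq_Ico, Finset.range_eq_Ico]
    linarith
  have hten : Tendsto (fun n => ∑ t ∈ Finset.range i, f t
      - ∑ t ∈ Finset.range i, f (n + t)) atTop (𝓝 (∑ t ∈ Finset.range i, f t)) := by
    have hz : Tendsto (fun n => ∑ t ∈ Finset.range i, f (n + t)) atTop (𝓝 0) := by
      have hterm : ∀ t : ℕ, Tendsto (fun n => f (n + t)) atTop (𝓝 0) := by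
        intro t
        exact hlim.comp (tendsto_add_atTop_nat t)
      have := tendsto_finset_sum (Finset.range i) (fun t _ => hterm t)
      simpa using this
    simpa using (tendsto_const_nhds.sub hz)
  apply hten.congr'
  filter_upwards [eventually_ge_atTop i] with n hn
  exact (key n hn).symm

lemma hasSum_odd_sq : HasSum (fun k : ℕ => cc k ^ 2) (π ^ 2 / 8) := by
  have h := hasSum_zeta_two
  have heven : HasSum (fun k : ℕ => (1 : ℝ) / ((2 * k : ℕ) : ℝ) ^ 2) (π ^ 2 / 24) := by
    have h4 := h.mul_left ((1 : ℝ) / 4)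
    have h5 : HasSum (fun n : ℕ => (1 : ℝ) / ((2 * n : ℕ) : ℝ) ^ 2) (1 / 4 * (π ^ 2 / 6)) := by
      apply hasSum_congr_fun' h4
      intro n
      rcases Nat.eq_zero_or_pos n with rfl | hn
      · simp
      · have hne : (n : ℝ) ≠ 0 := Nat.cast_ne_zero.2 hn.ne'
        push_cast
        field_simp
        ring
    convert h5 using 1
    ring
  have hinj : Function.Injective fun k : ℕ => 2 * k + 1 := by
    intro a b hab
    have : 2 * a + 1 = 2 * b + 1 := hab
    omega
  have hsodd : Summable (fun k : ℕ => (1 : ℝ) / ((2 * k + 1 : ℕ) : ℝ) ^ 2) :=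
    h.summable.comp_injective hinj
  have hodd := hsodd.hasSum
  have hall := HasSum.even_add_odd (f := fun n : ℕ => 1/(n:ℝ)^2) heven hodd
  have huniq := h.unique hall
  have hval : (∑' k : ℕ, (1 : ℝ) / ((2 * k + 1 : ℕ) : ℝ) ^ 2) = π ^ 2 / 8 := by linarith
  rw [hval] at hodd
  apply hasSum_congr_fun' hodd
  intro k
  unfold cc
  push_cast
  rw [div_pow, one_pow]

/-- partial fractions -/
lemma pf (j t : ℕ) (ht : 0 < t) :
    cc j * cc (j + t) = (1 / (2 * (t : ℝ))) * (cc j - cc (j + t)) := by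
  have h3 : (t : ℝ) ≠ 0 := Nat.cast_ne_zero.2 ht.ne'
  unfold cc
  push_cast
  have h1 : (2 * (j : ℝ) + 1) ≠ 0 := by positivity
  have h2 : (2 * ((j : ℝ) + (t : ℝ)) + 1) ≠ 0 := by positivity
  field_simp
  ring

lemma summable_cc_mul (t : ℕ) : Summable (fun j => cc j * cc (j + t)) := by
  have hb : Summable (fun j => cc j * cc j) := by
    apply Summable.congr hasSum_odd_sq.summable
    intro j
    ring
  refine Summable.of_nonneg_of_le (fun j => mul_nonneg (cc_nonneg j) (cc_nonneg _))
    (fun j => ?_) hb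
  exact mul_le_mul_of_nonneg_left (cc_anti (Nat.le_add_right _ _)) (cc_nonneg j)

theorem stmt7 (i : ℕ) (hi : 0 < i) :
    ∑' k : ℕ, h 1 (k + 1) / ((2 * ((k : ℝ) + 1) - 1) * (2 * i + 2 * ((k : ℝ) + 1) - 1)) =
      3 * (π ^ 2 / 6) / (8 * i) + (1 / (4 * i)) * ∑ k ∈ Finset.Icc 1 (i - 1), h 1 k / k := by
  obtain ⟨m, rfl⟩ : ∃ m, i = m + 1 := ⟨i - 1, by omega⟩
  set i := m + 1 with hi_def
  have hI : (0 : ℝ) < (i : ℝ) := by positivity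
  set F : ℕ → ℕ → ℝ := fun j k =>
    if j ≤ k then cc j / ((2 * (k : ℝ) + 1) * (2 * (k : ℝ) + 2 * i + 1)) else 0 with hF
  -- Step A : row sums
  have stepA : ∀ j : ℕ, HasSum (F j)
      (cc j * (1 / (2 * (i : ℝ))) * ∑ t ∈ Finset.range i, cc (j + t)) := by
    intro j
    have hlim' : Tendsto (fun k => cc (j + k)) atTop (𝓝 0) := by
      have := cc_tendsto.comp (tendsto_add_atTop_nat j)
      exact this.congr (fun a => by simp [Function.comp, Nat.add_comm])
    have htele := hasSum_tele (fun k => cc (j + k)) (fun n => cc_nonneg _)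
      (fun a b hab => cc_anti (by omega)) hlim' i
    have hmul := htele.mul_left (cc j * (1 / (2 * (i : ℝ))))
    have hcomp : (fun k => cc j * (1 / (2 * (i : ℝ))) * (cc (j + k) - cc (j + (k + i))))
        = (F j) ∘ (fun k => j + k) := by
      funext k
      have hjk : j ≤ j + k := Nat.le_add_right _ _
      simp only [Function.comp, hF, if_pos hjk]
      unfold cc
      have h3 : (i : ℝ) ≠ 0 := hI.ne'
      push_cast
      have h1 : (2 * ((j : ℝ) + k) + 1) ≠ 0 := by positivity
      have h2 : (2 * ((j : ℝ) + ((k : ℝ) + i)) + 1) ≠ 0 := by positivity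
      have h4 : (2 * ((j : ℝ) + k) + 2 * (i : ℝ) + 1) ≠ 0 := by positivity
      field_simp
      ring
    rw [hcomp] at hmul
    have hinj : Function.Injective (fun k : ℕ => j + k) := fun a b hab => by
      have : j + a = j + b := hab
      omega
    have hzero : ∀ x ∉ Set.range (fun k : ℕ => j + k), F j x = 0 := by
      intro x hx
      have hnle : ¬ j ≤ x := by
        intro hle
        exact hx ⟨x - j, show j + (x - j) = x by omega⟩
      simp [hF, hnle]
    exact (hinj.hasSum_iff hzero).1 hmul
  -- value of the row sums
  set S : ℕ → ℝ := fun j => cc j * (1 / (2 * (i : ℝ))) * ∑ t ∈ Finset.range i, cc (j + t)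
    with hS
  have hSeq : ∀ j, S j = (1 / (2 * (i : ℝ))) * ∑ t ∈ Finset.range i, cc j * cc (j + t) := by
    intro j
    simp only [hS]
    rw [Finset.mul_sum, Finset.mul_sum]
    apply Finset.sum_congr rfl
    intro t _
    ring
  -- Step B : summability of the double family
  have hsummableS : Summable S := by
    apply Summable.congr _ (fun j => (hSeq j).symm)
    apply Summable.mul_left
    exact summable_sum (fun t _ => summable_cc_mul t)
  have hFnonneg : ∀ p : ℕ × ℕ, 0 ≤ Function.uncurry F p := by
    intro p
    rcases p with ⟨j, k⟩
    by_cases hc : j ≤ k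
    · simp only [Function.uncurry, hF, if_pos hc]
      have h1 := cc_nonneg j
      positivity
    · simp [Function.uncurry, hF, hc]
  have hsum2 : Summable (Function.uncurry F) := by
    rw [summable_prod_of_nonneg hFnonneg]
    constructor
    · exact fun j => (stepA j).summable
    · apply Summable.congr hsummableS
      intro j
      exact ((stepA j).tsum_eq).symm
  -- Step C : rewrite the LHS as double sum and swap
  have hLHS : ∑' k : ℕ, h 1 (k + 1) / ((2 * ((k : ℝ) + 1) - 1) * (2 * i + 2 * ((k : ℝ) + 1) - 1))
      = ∑' (k : ℕ) (j : ℕ), F j k := by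
    apply tsum_congr
    intro k
    have hterm : h 1 (k + 1) / ((2 * ((k : ℝ) + 1) - 1) * (2 * i + 2 * ((k : ℝ) + 1) - 1))
        = ∑ j ∈ Finset.range (k + 1), F j k := by
      rw [h_eq, Finset.sum_div]
      apply Finset.sum_congr rfl
      intro j hj
      have hjk : j ≤ k := by
        simp only [Finset.mem_range] at hj; omega
      simp only [hF, if_pos hjk]
      congr 1
      ring
    rw [hterm]
    symm
    apply tsum_eq_sum
    intro j hj
    have hnle : ¬ j ≤ k := by
      simp only [Finset.mem_range] at hj; omega
    simp [hF, hnle]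
  have hswap : ∑' (k : ℕ) (j : ℕ), F j k = ∑' (j : ℕ) (k : ℕ), F j k :=
    Summable.tsum_comm hsum2
  -- Step D : evaluate the columns
  set A : ℕ → ℝ := fun t => if t = 0 then π ^ 2 / 8
    else (1 / (2 * (t : ℝ))) * ∑ s ∈ Finset.range t, cc s with hA
  have hcol : ∀ t : ℕ, HasSum (fun j => cc j * cc (j + t)) (A t) := by
    intro t
    rcases Nat.eq_zero_or_pos t with rfl | ht
    · simp only [hA, if_pos rfl]
      apply hasSum_congr_fun' hasSum_odd_sq
      intro j
      rw [Nat.add_zero]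
      ring
    · have htele := hasSum_tele cc cc_nonneg (fun a b hab => cc_anti hab) cc_tendsto t
      have hmul := htele.mul_left (1 / (2 * (t : ℝ)))
      simp only [hA, if_neg ht.ne']
      apply hasSum_congr_fun' hmul
      intro j
      exact pf j t ht
  have hScol : HasSum S ((1 / (2 * (i : ℝ))) * ∑ t ∈ Finset.range i, A t) := by
    have hs := (hasSum_sum (s := Finset.range i)
      (f := fun t j => cc j * cc (j + t)) (a := A) (fun t _ => hcol t)).mul_left
      (1 / (2 * (i : ℝ)))
    apply hasSum_congr_fun' hs
    intro j
    exact hSeq j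
  have hinnerval : ∑' (j : ℕ) (k : ℕ), F j k
      = (1 / (2 * (i : ℝ))) * ∑ t ∈ Finset.range i, A t := by
    rw [← hScol.tsum_eq]
    apply tsum_congr
    intro j
    exact (stepA j).tsum_eq
  rw [hLHS, hswap, hinnerval]
  -- Step E : final arithmetic
  have hA0 : A 0 = π ^ 2 / 8 := by simp [hA]
  have hrange : ∑ t ∈ Finset.range i, A t
      = (∑ t ∈ Finset.range m, A (t + 1)) + A 0 := by
    rw [hi_def]
    exact Finset.sum_range_succ' A m
  have hIcc : ∑ k ∈ Finset.Icc 1 (i - 1), h 1 k / (k : ℝ)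
      = ∑ t ∈ Finset.range m, h 1 (t + 1) / ((t : ℝ) + 1) := by
    have he : Finset.Icc 1 (i - 1) = Finset.Ico 1 (m + 1) := by
      rw [hi_def, Nat.add_sub_cancel, Finset.Ico_add_one_right_eq_Icc]
    rw [he, Finset.sum_Ico_eq_sum_range]
    simp only [Nat.add_sub_cancel]
    apply Finset.sum_congr rfl
    intro t _
    rw [Nat.add_comm 1 t]
    push_cast
    ring_nf
  rw [hrange, hA0, hIcc]
  have hAterm : ∀ t : ℕ, A (t + 1) = (1 / (2 * ((t : ℝ) + 1))) * h 1 (t + 1) := by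
    intro t
    simp only [hA, if_neg (Nat.succ_ne_zero t), h_eq]
    push_cast
    ring_nf
  rw [Finset.sum_congr rfl (fun t _ => hAterm t)]
  rw [mul_add, Finset.mul_sum, Finset.mul_sum]
  have hpart1 : (1 / (2 * (i : ℝ))) * (π ^ 2 / 8) = 3 * (π ^ 2 / 6) / (8 * (i : ℝ)) := by
    rw [eq_div_iff (by positivity)]
    field_simp
    ring
  have hpart2 : ∀ t ∈ Finset.range m,
      (1 / (2 * (i : ℝ))) * ((1 / (2 * ((t : ℝ) + 1))) * h 1 (t + 1))
      = (1 / (4 * (i : ℝ))) * (h 1 (t + 1) / ((t : ℝ) + 1)) := by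
    intro t _
    have ht1 : ((t : ℝ) + 1) ≠ 0 := by positivity
    field_simp
    try ring
    try simp
  rw [Finset.sum_congr rfl hpart2, hpart1]
  ring
end

section
/- $\sum_{k=1}^{\infty} \frac{h_k^{(4)}}{(2k-1)^4} = \frac{1035}{1024}\zeta(8)$. -/
open Real

open Finset Filter Topology

lemma my_bernoulli'_six : bernoulli' 6 = 1 / 42 := by
  have h := sum_bernoulli' 7
  simp only [Finset.sum_range_succ, Finset.sum_range_zero, bernoulli'_zero, bernoulli'_one,
    bernoulli'_two, bernoulli'_three, bernoulli'_four,
    bernoulli'_eq_zero_of_odd (by decide : Odd 5) (by norm_num)] at h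
  norm_num [Nat.choose] at h
  linarith

lemma my_bernoulli'_eight : bernoulli' 8 = -1 / 30 := by
  have h := sum_bernoulli' 9
  simp only [Finset.sum_range_succ, Finset.sum_range_zero, bernoulli'_zero, bernoulli'_one,
    bernoulli'_two, bernoulli'_three, bernoulli'_four, my_bernoulli'_six,
    bernoulli'_eq_zero_of_odd (by decide : Odd 5) (by norm_num),
    bernoulli'_eq_zero_of_odd (by decide : Odd 7) (by norm_num)] at h
  norm_num [Nat.choose] at h
  linarith

lemma hasSum_zeta_eight : HasSum (fun n : ℕ => (1 : ℝ) / (n : ℝ) ^ 8) (π ^ 8 / 9450) := by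
  convert hasSum_zeta_nat (k := 4) (by norm_num) using 1; norm_num
  rw [bernoulli_eq_bernoulli'_of_ne_one (by decide), my_bernoulli'_eight]
  norm_num [Nat.factorial]; field_simp; ring

noncomputable def bb (k : ℕ) : ℝ := 1 / (2 * (k : ℝ) + 1) ^ 4

lemma bb_nonneg (k : ℕ) : 0 ≤ bb k := by
  unfold bb; positivity

lemma odd_part {f : ℕ → ℝ} {S E : ℝ} (hf : HasSum f S)
    (he : HasSum (fun n => f (2 * n)) E) : HasSum (fun n => f (2 * n + 1)) (S - E) := by
  have hinj : Function.Injective (fun n : ℕ => 2 * n + 1) := by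
    intro a b hab; dsimp at hab; omega
  have hs : Summable (fun n => f (2 * n + 1)) := hf.summable.comp_injective hinj
  have ho := hs.hasSum
  have huniq : E + ∑' n, f (2 * n + 1) = S := (he.even_add_odd ho).unique hf
  rw [show S - E = ∑' n, f (2 * n + 1) by linarith]
  exact ho

lemma even_pow_part {p : ℕ} {S : ℝ}
    (hf : HasSum (fun n : ℕ => (1 : ℝ) / (n : ℝ) ^ p) S) :
    HasSum (fun n : ℕ => (1 : ℝ) / ((2 * n : ℕ) : ℝ) ^ p) (S / 2 ^ p) := by
  have h := hf.mul_left ((1 : ℝ) / 2 ^ p)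
  have heq : (fun n : ℕ => (1 : ℝ) / 2 ^ p * (1 / (n : ℝ) ^ p)) =
      fun n : ℕ => (1 : ℝ) / ((2 * n : ℕ) : ℝ) ^ p := by
    funext n; push_cast; rw [mul_pow]; ring
  rw [heq] at h
  convert h using 1; rfl; ring

lemma hasSum_odd4 : HasSum bb (π ^ 4 / 96) := by
  have he := even_pow_part hasSum_zeta_four
  have h := odd_part hasSum_zeta_four he
  have heq : (fun n : ℕ => (1 : ℝ) / ((2 * n + 1 : ℕ) : ℝ) ^ 4) = bb := by
    funext n; unfold bb; push_cast; ring_nf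
  rw [heq] at h
  convert h using 1
  norm_num
  ring

lemma hasSum_odd8 : HasSum (fun k => bb k ^ 2) (π ^ 8 / 9450 * (255 / 256)) := by
  have he := even_pow_part hasSum_zeta_eight
  have h := odd_part hasSum_zeta_eight he
  have heq : (fun n : ℕ => (1 : ℝ) / ((2 * n + 1 : ℕ) : ℝ) ^ 8) = fun k => bb k ^ 2 := by
    funext n; unfold bb; push_cast; rw [div_pow, one_pow, ← pow_mul]
  rw [heq] at h
  convert h using 1
  norm_num
  ring

lemma partial_key (n : ℕ) :
    ∑ k ∈ range n, (∑ j ∈ range (k + 1), bb j) * bb k =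
      (∑ j ∈ range n, bb j) ^ 2 / 2 + (∑ k ∈ range n, bb k ^ 2) / 2 := by
  induction n with
  | zero => simp
  | succ n ih =>
    rw [sum_range_succ _ n, ih, sum_range_succ bb n, sum_range_succ (fun k => bb k ^ 2) n]
    ring

lemma hasSum_main : HasSum (fun k => (∑ j ∈ range (k + 1), bb j) * bb k)
    ((π ^ 4 / 96) ^ 2 / 2 + π ^ 8 / 9450 * (255 / 256) / 2) := by
  have hnn : ∀ k, 0 ≤ (∑ j ∈ range (k + 1), bb j) * bb k := fun k =>
    mul_nonneg (sum_nonneg fun j _ => bb_nonneg j) (bb_nonneg k)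
  rw [hasSum_iff_tendsto_nat_of_nonneg hnn]
  have h4 := hasSum_odd4.tendsto_sum_nat
  have h8 := hasSum_odd8.tendsto_sum_nat
  have ht := ((Tendsto.pow h4 2).div_const 2).add (h8.div_const 2)
  exact ht.congr fun n => (partial_key n).symm

lemma zeta8_val : zeta 8 = π ^ 8 / 9450 := by
  unfold zeta
  have h0 : HasSum (fun n : ℕ => (1 : ℝ) / ((n : ℝ) + 1) ^ 8) (π ^ 8 / 9450) := by
    have h := (hasSum_nat_add_iff' (f := fun n : ℕ => (1 : ℝ) / (n : ℝ) ^ 8) 1).mpr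
      hasSum_zeta_eight
    simp only [Finset.sum_range_one, Nat.cast_zero] at h
    norm_num at h
    convert h using 2 with n; rfl
    push_cast
    ring
  exact h0.tsum_eq

lemma h_eq_s11 (k : ℕ) : h 4 (k + 1) = ∑ j ∈ range (k + 1), bb j := by
  induction k with
  | zero =>
    unfold h bb
    norm_num
  | succ k ih =>
    unfold h at ih ⊢
    rw [show k + 1 + 1 = (k + 1) + 1 from rfl, Finset.sum_Icc_succ_top (by omega : 1 ≤ k + 1 + 1),
      ih, sum_range_succ]
    have : (1 : ℝ) / (2 * ((k + 1 + 1 : ℕ) : ℝ) - 1) ^ 4 = bb (k + 1) := by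
      unfold bb
      push_cast
      norm_num
      ring_nf
    rw [this]
    rw [sum_range_succ _ (k + 1), sum_range_succ _ k]

theorem stmt11 :
    ∑' k : ℕ, h 4 (k + 1) / (2 * ((k : ℝ) + 1) - 1) ^ 4 = 1035 / 1024 * zeta 8 := by
  have heq : (fun k : ℕ => h 4 (k + 1) / (2 * ((k : ℝ) + 1) - 1) ^ 4) =
      fun k => (∑ j ∈ range (k + 1), bb j) * bb k := by
    funext k
    rw [h_eq_s11]
    unfold bb
    rw [div_eq_mul_one_div, show (2 * ((k : ℝ) + 1) - 1) = 2 * (k : ℝ) + 1 by ring]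
  rw [heq, hasSum_main.tsum_eq, zeta8_val]
  ring
end

section
/- $\sum_{k=1}^{\infty} \left( \frac{h_k^{(3)}}{(2k-1)^5} + \frac{h_k^{(5)}}{(2k-1)^3} \right) = \frac{255}{256}\zeta(8) + \frac{217}{256}\zeta(3)\zeta(5)$. -/
open Real

namespace Aux13

noncomputable def a (s k : ℕ) : ℝ := 1 / (2 * (k : ℝ) + 1) ^ s

lemma a_nonneg (s k : ℕ) : 0 ≤ a s k := by unfold a; positivity

lemma summable_base {s : ℕ} (hs : 2 ≤ s) : Summable (fun k : ℕ => 1 / ((k : ℝ) + 1) ^ s) := by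
  have h1 : Summable (fun k : ℕ => 1 / (k : ℝ) ^ s) := summable_one_div_nat_pow.mpr (by omega)
  have := (summable_nat_add_iff 1).mpr h1
  simpa using this

lemma summable_a {s : ℕ} (hs : 2 ≤ s) : Summable (a s) := by
  refine (summable_base hs).of_nonneg_of_le (a_nonneg s) (fun k => ?_)
  unfold a
  have hk : (0:ℝ) ≤ (k:ℝ) := Nat.cast_nonneg k
  gcongr <;> linarith

noncomputable def lam (s : ℕ) : ℝ := ∑' k, a s k

lemma lam_eq {s : ℕ} (hs : 2 ≤ s) : zeta s = lam s + (1/2)^s * zeta s := by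
  have he : Summable (fun k : ℕ => 1 / ((2*k : ℕ) + (1:ℝ)) ^ s) := by
    have := summable_a hs
    unfold a at this
    simpa using this
  have ho : Summable (fun k : ℕ => 1 / (((2*k+1 : ℕ) : ℝ) + 1) ^ s) := by
    have : (fun k : ℕ => 1 / (((2*k+1 : ℕ) : ℝ) + 1) ^ s)
        = fun k : ℕ => (1/2)^s * (1 / ((k : ℝ) + 1) ^ s) := by
      funext k
      push_cast
      rw [one_div_pow, div_mul_div_comm, one_mul, ← mul_pow]
      ring_nf
    rw [this]
    exact (summable_base hs).mul_left _
  have key := tsum_even_add_odd (f := fun n : ℕ => 1 / ((n : ℝ) + 1) ^ s) he ho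
  have h1 : (∑' k : ℕ, 1 / (((2*k : ℕ) : ℝ) + 1) ^ s) = lam s := by
    unfold lam a; push_cast; rfl
  have h2 : (∑' k : ℕ, 1 / (((2*k+1 : ℕ) : ℝ) + 1) ^ s) = (1/2)^s * zeta s := by
    have heq : (fun k : ℕ => 1 / (((2*k+1 : ℕ) : ℝ) + 1) ^ s)
        = fun k : ℕ => (1/2)^s * (1 / ((k : ℝ) + 1) ^ s) := by
      funext k
      push_cast
      rw [one_div_pow, div_mul_div_comm, one_mul, ← mul_pow]
      ring_nf
    rw [heq, tsum_mul_left]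
    rfl
  rw [h1, h2] at key
  have key' : lam s + (1/2)^s * zeta s = zeta s := by simpa [zeta] using key
  linarith [key']

lemma h_eq (n k : ℕ) : h n (k+1) = ∑ j ∈ Finset.range (k+1), a n j := by
  unfold h a
  rw [← Finset.Ico_add_one_right_eq_Icc, Finset.sum_Ico_eq_sum_range]
  apply Finset.sum_congr (by norm_num)
  intro j _
  push_cast
  ring_nf

lemma partial_eq (a b : ℕ → ℝ) (n : ℕ) :
    ∑ k ∈ Finset.range (n+1),
      ((∑ j ∈ Finset.range (k+1), a j) * b k + (∑ j ∈ Finset.range (k+1), b j) * a k)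
    = (∑ j ∈ Finset.range (n+1), a j) * (∑ j ∈ Finset.range (n+1), b j)
      + ∑ k ∈ Finset.range (n+1), a k * b k := by
  induction n with
  | zero => simp; ring
  | succ n ih =>
    rw [Finset.sum_range_succ
      (f := fun k => (∑ j ∈ Finset.range (k+1), a j) * b k + (∑ j ∈ Finset.range (k+1), b j) * a k),
      ih, Finset.sum_range_succ a (n+1), Finset.sum_range_succ b (n+1),
      Finset.sum_range_succ (fun k => a k * b k) (n+1)]
    ring

open Filter Topology in
lemma main (a b : ℕ → ℝ) (ha0 : ∀ k, 0 ≤ a k) (hb0 : ∀ k, 0 ≤ b k)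
    (ha : Summable a) (hb : Summable b) (hab : Summable (fun k => a k * b k)) :
    ∑' k, ((∑ j ∈ Finset.range (k+1), a j) * b k + (∑ j ∈ Finset.range (k+1), b j) * a k)
    = (∑' k, a k) * (∑' k, b k) + ∑' k, a k * b k := by
  set F := fun k => (∑ j ∈ Finset.range (k+1), a j) * b k + (∑ j ∈ Finset.range (k+1), b j) * a k
    with hF
  have hFsum : Summable F := by
    apply Summable.of_nonneg_of_le
    · intro k
      have h1 : 0 ≤ ∑ j ∈ Finset.range (k+1), a j := Finset.sum_nonneg fun j _ => ha0 j
      have h2 : 0 ≤ ∑ j ∈ Finset.range (k+1), b j := Finset.sum_nonneg fun j _ => hb0 j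
      exact add_nonneg (mul_nonneg h1 (hb0 k)) (mul_nonneg h2 (ha0 k))
    · intro k
      show F k ≤ (∑' j, a j) * b k + (∑' j, b j) * a k
      simp only [hF]
      gcongr <;> first
        | exact hb0 _
        | exact ha0 _
        | exact Summable.sum_le_tsum _ (fun j _ => ha0 j) ha
        | exact Summable.sum_le_tsum _ (fun j _ => hb0 j) hb
        | exact Finset.sum_nonneg fun j _ => ha0 j
        | exact Finset.sum_nonneg fun j _ => hb0 j
    · exact ((hb.mul_left _).add (ha.mul_left _))
  have hT1 : Tendsto (fun n => ∑ k ∈ Finset.range n, F k) atTop (𝓝 (∑' k, F k)) :=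
    hFsum.hasSum.tendsto_sum_nat
  have hA : Tendsto (fun n => ∑ j ∈ Finset.range (n+1), a j) atTop (𝓝 (∑' k, a k)) :=
    ha.hasSum.tendsto_sum_nat.comp (tendsto_add_atTop_nat 1)
  have hB : Tendsto (fun n => ∑ j ∈ Finset.range (n+1), b j) atTop (𝓝 (∑' k, b k)) :=
    hb.hasSum.tendsto_sum_nat.comp (tendsto_add_atTop_nat 1)
  have hD : Tendsto (fun n => ∑ k ∈ Finset.range (n+1), a k * b k) atTop
      (𝓝 (∑' k, a k * b k)) :=
    hab.hasSum.tendsto_sum_nat.comp (tendsto_add_atTop_nat 1)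
  have hT2 : Tendsto (fun n => ∑ k ∈ Finset.range (n+1), F k) atTop
      (𝓝 ((∑' k, a k) * (∑' k, b k) + ∑' k, a k * b k)) := by
    have : (fun n => ∑ k ∈ Finset.range (n+1), F k)
        = fun n => (∑ j ∈ Finset.range (n+1), a j) * (∑ j ∈ Finset.range (n+1), b j)
          + ∑ k ∈ Finset.range (n+1), a k * b k := by
      funext n; exact partial_eq a b n
    rw [this]
    exact (hA.mul hB).add hD
  have hT1' : Tendsto (fun n => ∑ k ∈ Finset.range (n+1), F k) atTop (𝓝 (∑' k, F k)) :=
    hT1.comp (tendsto_add_atTop_nat 1)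
  exact tendsto_nhds_unique hT1' hT2

end Aux13

theorem stmt13 :
    ∑' k : ℕ, (h 3 (k + 1) / (2 * ((k : ℝ) + 1) - 1) ^ 5 + h 5 (k + 1) / (2 * ((k : ℝ) + 1) - 1) ^ 3) =
      255 / 256 * zeta 8 + 217 / 256 * zeta 3 * zeta 5 := by
  have h3 : (2:ℕ) ≤ 3 := by norm_num
  have h5 : (2:ℕ) ≤ 5 := by norm_num
  have h8 : (2:ℕ) ≤ 8 := by norm_num
  have hab : ∀ k, Aux13.a 3 k * Aux13.a 5 k = Aux13.a 8 k := by
    intro k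
    unfold Aux13.a
    rw [div_mul_div_comm, one_mul, ← pow_add]
  have hterm : ∀ k : ℕ, h 3 (k + 1) / (2 * ((k : ℝ) + 1) - 1) ^ 5 + h 5 (k + 1) / (2 * ((k : ℝ) + 1) - 1) ^ 3
      = (∑ j ∈ Finset.range (k+1), Aux13.a 3 j) * Aux13.a 5 k
        + (∑ j ∈ Finset.range (k+1), Aux13.a 5 j) * Aux13.a 3 k := by
    intro k
    rw [Aux13.h_eq, Aux13.h_eq, show 2*((k:ℝ)+1)-1 = 2*(k:ℝ)+1 by ring]
    unfold Aux13.a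
    ring
  have key := Aux13.main (Aux13.a 3) (Aux13.a 5) (Aux13.a_nonneg 3) (Aux13.a_nonneg 5)
    (Aux13.summable_a h3) (Aux13.summable_a h5)
    (by simpa only [hab] using Aux13.summable_a h8)
  rw [tsum_congr hterm, key]
  have e8 : (∑' k, Aux13.a 3 k * Aux13.a 5 k) = Aux13.lam 8 := by
    unfold Aux13.lam; exact tsum_congr hab
  rw [e8]
  have l3 := Aux13.lam_eq h3
  have l5 := Aux13.lam_eq h5
  have l8 := Aux13.lam_eq h8
  show Aux13.lam 3 * Aux13.lam 5 + Aux13.lam 8 = _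
  have e3 : Aux13.lam 3 = 7/8 * zeta 3 := by rw [show ((1:ℝ)/2)^3 = 1/8 by norm_num] at l3; linarith
  have e5 : Aux13.lam 5 = 31/32 * zeta 5 := by rw [show ((1:ℝ)/2)^5 = 1/32 by norm_num] at l5; linarith
  have e8' : Aux13.lam 8 = 255/256 * zeta 8 := by rw [show ((1:ℝ)/2)^8 = 1/256 by norm_num] at l8; linarith
  rw [e3, e5, e8']
  ring
end
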